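/- arXiv:2303.07211 — 2 statements merged into one kernel-verified Lean document; each statement's English description precedes it below -/
import Mathlib

section
/- For any q ≥ 2 and n > k ≥ 1, there exists a q-ary (k,n)-frameproof code of length ⌈n/(q-1)⌉. In particular, the concatenation of q-1 diagonal matrices of size ⌈n/(q-1)⌉×⌈n/(q-1)⌉, where the i-th matrix has the symbol i on its diagonal and 0 elsewhere, restricted to any n columns, is such a code. -/
/-- `M` is a `q`-ary `(k,n)`-frameproof code of length `t`. -/
def IsFrameproof (q k n t : ℕ) (M : Fin t → Fin n → ℕ) : Prop :=
  (∀ i j, M i j < q) ∧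
  ∀ c : Fin n, ∀ S : Finset (Fin n), S.card = k → c ∉ S →
    ∃ i : Fin t, ∀ j ∈ S, M i j ≠ M i c

theorem diag_frameproof (q k n : ℕ) (hq : 2 ≤ q) (hk : 1 ≤ k) (hn : k < n) :
    ∃ M : Fin (⌈(n : ℝ) / ((q : ℝ) - 1)⌉₊) → Fin n → ℕ,
      IsFrameproof q k n (⌈(n : ℝ) / ((q : ℝ) - 1)⌉₊) M := by
  set t := ⌈(n : ℝ) / ((q : ℝ) - 1)⌉₊ with ht
  have hq1 : (0 : ℝ) < (q : ℝ) - 1 := by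
    have : (2 : ℝ) ≤ q := by exact_mod_cast hq
    linarith
  have hnpos : 0 < n := lt_of_le_of_lt (Nat.zero_le k) hn
  have htpos : 0 < t := by
    rw [ht]
    apply Nat.ceil_pos.mpr
    positivity
  have hnle : n ≤ t * (q - 1) := by
    have h1 : (n : ℝ) / ((q : ℝ) - 1) ≤ t := Nat.le_ceil _
    have h2 : (n : ℝ) ≤ t * ((q : ℝ) - 1) := by
      rw [div_le_iff₀ hq1] at h1; exact h1
    have hq1' : 1 ≤ q := le_trans (by norm_num) hq
    have : ((q : ℝ) - 1) = ((q - 1 : ℕ) : ℝ) := by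
      push_cast [hq1']; ring
    rw [this] at h2
    exact_mod_cast h2
  refine ⟨fun i j => if (j : ℕ) % t = (i : ℕ) then (j : ℕ) / t + 1 else 0, ?_, ?_⟩
  · intro i j
    by_cases h : (j : ℕ) % t = (i : ℕ)
    · simp only [h, if_true]
      have hj : (j : ℕ) < t * (q - 1) := lt_of_lt_of_le j.isLt hnle
      have : (j : ℕ) / t < q - 1 := Nat.div_lt_of_lt_mul hj
      omega
    · simp only [h, if_false]; omega
  · intro c S _ hcS
    refine ⟨⟨(c : ℕ) % t, Nat.mod_lt _ htpos⟩, ?_⟩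
    intro j hjS
    have hjc : j ≠ c := fun h => hcS (h ▸ hjS)
    simp only
    rw [if_true]
    by_cases h : (j : ℕ) % t = (c : ℕ) % t
    · rw [if_pos h]
      intro heq
      apply hjc
      have : (j : ℕ) / t = (c : ℕ) / t := by omega
      have : (j : ℕ) = (c : ℕ) := by
        conv_lhs => rw [← Nat.div_add_mod (j : ℕ) t]
        rw [this, h, Nat.div_add_mod]
      exact Fin.ext this
    · rw [if_neg h]; exact (Nat.succ_ne_zero _).symm
end

section
/- Mapping each symbol i ∈ {0,...,q-1} of a q-ary (k,n)-frameproof code of length t to the binary column vector e_{i+1} of length q (with a 1 in position i+1 and 0 elsewhere) yields a binary (k,n)-strongly selective code of length q·t. -/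
/-- `N` is a binary `(k,n)`-strongly selective code with rows indexed by `ι`. -/
def IsBinaryStronglySelective (k n : ℕ) {ι : Type*} (N : ι → Fin n → ℕ) : Prop :=
  (∀ i j, N i j < 2) ∧
  ∀ S : Finset (Fin n), S.card = k → ∀ c ∈ S,
    ∃ i : ι, N i c = 1 ∧ ∀ j ∈ S, j ≠ c → N i j = 0

theorem fp_to_binary_ss (q k n t : ℕ) (hq : 2 ≤ q) (hk : 1 ≤ k) (hn : k < n)
    (M : Fin t → Fin n → ℕ) (hM : IsFrameproof q k n t M) :
    IsBinaryStronglySelective k n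
      (fun p : Fin t × Fin q => fun j : Fin n => if M p.1 j = (p.2 : ℕ) then 1 else 0) := by
  obtain ⟨hlt, hfp⟩ := hM
  constructor
  · intro i j
    dsimp only; split <;> omega
  · intro S hS c hc
    -- find an element outside S
    have hcard : S.card < (Finset.univ : Finset (Fin n)).card := by
      simp [hS, hn]
    obtain ⟨x, _, hx⟩ := Finset.exists_of_ssubset
      (Finset.ssubset_univ_iff.2 (fun h : S = Finset.univ => by simp [h] at hcard))
    have hxc : x ≠ c := fun h => hx (h ▸ hc)
    have hcS' : c ∉ insert x (S.erase c) := by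
      simp [hxc.symm]
    have hcard' : (insert x (S.erase c)).card = k := by
      rw [Finset.card_insert_of_notMem (fun h => hx (Finset.mem_of_mem_erase h)),
        Finset.card_erase_of_mem hc, hS]
      omega
    obtain ⟨i, hi⟩ := hfp c _ hcard' hcS'
    refine ⟨(i, ⟨M i c, hlt i c⟩), by simp, ?_⟩
    intro j hj hjc
    have := hi j (Finset.mem_insert_of_mem (Finset.mem_erase.2 ⟨hjc, hj⟩))
    simp [this]
end
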